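/- For a profinite group G and finite discrete G-sets A and B, the hom set Span_{G}(A,B) in the Burnside category of G is isomorphic to the filtered colimit over open normal subgroups N of G of the hom sets Span_{G/N}(A,B) in the Burnside categories of the finite quotients, where the colimit maps are induced by inflation. -/

import Mathlib

open MulAction

/-- A finite discrete `G`-set: a finite set with a `G`-action all of whose point
stabilisers are open subgroups of `G`. -/
structure FinDiscGSet (G : Type) [Group G] [TopologicalSpace G] : Type 1 where
  carrier : Type
  [fintype : Fintype carrier]
  [action : MulAction G carrier]
  isOpen_stabilizer : ∀ a : carrier, IsOpen ((MulAction.stabilizer G a : Subgroup G) : Set G)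

attribute [instance] FinDiscGSet.fintype FinDiscGSet.action

namespace FinDiscGSet

variable {G : Type} [Group G] [TopologicalSpace G]

/-- Equivariant bijections between finite discrete `G`-sets. -/
def EqvIso (A B : FinDiscGSet G) : Type :=
  {e : A.carrier ≃ B.carrier // ∀ (g : G) (a : A.carrier), e (g • a) = g • e a}

end FinDiscGSet

/-- A span of finite discrete `G`-sets from `A` to `B`: a pair of equivariant maps
`A ← M → B`. -/
structure PreSpan {G : Type} [Group G] [TopologicalSpace G]
    (A B : FinDiscGSet G) : Type 1 where
  mid : FinDiscGSet G
  left : mid.carrier → A.carrier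
  right : mid.carrier → B.carrier
  left_equivariant : ∀ (g : G) (x : mid.carrier), left (g • x) = g • left x
  right_equivariant : ∀ (g : G) (x : mid.carrier), right (g • x) = g • right x

namespace PreSpan

variable {G : Type} [Group G] [TopologicalSpace G] {A B C D : FinDiscGSet G}

/-- Two spans are equivalent if there is an equivariant isomorphism of the middle
objects commuting with both legs. -/
def Equiv (s t : PreSpan A B) : Prop :=
  ∃ e : FinDiscGSet.EqvIso s.mid t.mid,
    (∀ x, t.left (e.1 x) = s.left x) ∧ (∀ x, t.right (e.1 x) = s.right x)

/-- The carrier of the pullback of two spans. -/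
abbrev pbCarrier (s : PreSpan A B) (t : PreSpan B C) : Type :=
  {p : s.mid.carrier × t.mid.carrier // s.right p.1 = t.left p.2}

noncomputable instance (s : PreSpan A B) (t : PreSpan B C) : Fintype (pbCarrier s t) := by
  classical exact Subtype.fintype _

instance (s : PreSpan A B) (t : PreSpan B C) : MulAction G (pbCarrier s t) where
  smul := fun g p =>
    ⟨(g • p.1.1, g • p.1.2), by rw [s.right_equivariant, t.left_equivariant, p.2]⟩
  one_smul := by
    rintro ⟨⟨x, y⟩, h⟩
    exact Subtype.ext (Prod.ext (one_smul G x) (one_smul G y))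
  mul_smul := by
    rintro g h ⟨⟨x, y⟩, hxy⟩
    exact Subtype.ext (Prod.ext (mul_smul g h x) (mul_smul g h y))

/-- The pullback of two spans, as a finite discrete `G`-set. -/
noncomputable def pbSet (s : PreSpan A B) (t : PreSpan B C) : FinDiscGSet G where
  carrier := pbCarrier s t
  isOpen_stabilizer := by
    rintro ⟨⟨x, y⟩, hxy⟩
    have : ((MulAction.stabilizer G
          (⟨(x, y), hxy⟩ : pbCarrier s t) : Subgroup G) : Set G) =
        ((MulAction.stabilizer G x : Subgroup G) : Set G) ∩
          ((MulAction.stabilizer G y : Subgroup G) : Set G) := by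
      ext g
      simp only [SetLike.mem_coe, MulAction.mem_stabilizer_iff, Set.mem_inter_iff]
      constructor
      · intro h
        have := congrArg Subtype.val h
        exact ⟨congrArg Prod.fst this, congrArg Prod.snd this⟩
      · rintro ⟨h1, h2⟩
        apply Subtype.ext
        show (g • x, g • y) = (x, y)
        rw [h1, h2]
    rw [this]
    exact (s.mid.isOpen_stabilizer x).inter (t.mid.isOpen_stabilizer y)

/-- Composition of spans by pullback. -/
noncomputable def comp (s : PreSpan A B) (t : PreSpan B C) : PreSpan A C where
  mid := pbSet s t
  left := fun p => s.left p.1.1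
  right := fun p => t.right p.1.2
  left_equivariant := by rintro g ⟨⟨x, y⟩, h⟩; exact s.left_equivariant g x
  right_equivariant := by rintro g ⟨⟨x, y⟩, h⟩; exact t.right_equivariant g y

/-- Disjoint union of spans. -/
def add (s t : PreSpan A B) : PreSpan A B where
  mid :=
    { carrier := s.mid.carrier ⊕ t.mid.carrier
      action :=
        { smul := fun g x => Sum.map (fun a => g • a) (fun b => g • b) x
          one_smul := by rintro (a | b) <;> simp [Sum.map]
          mul_smul := by intro g h x; rcases x with a | b <;> simp [Sum.map, mul_smul] }
      isOpen_stabilizer := by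
        rintro (a | b)
        · convert s.mid.isOpen_stabilizer a using 2
          ext g
          simp [MulAction.mem_stabilizer_iff]
        · convert t.mid.isOpen_stabilizer b using 2
          ext g
          simp [MulAction.mem_stabilizer_iff] }
  left := Sum.elim s.left t.left
  right := Sum.elim s.right t.right
  left_equivariant := by rintro g (x | x) <;> simp [Sum.map, s.left_equivariant, t.left_equivariant]
  right_equivariant := by
    rintro g (x | x) <;> simp [Sum.map, s.right_equivariant, t.right_equivariant]

/-- The empty span. -/
def emptySpan (A B : FinDiscGSet G) : PreSpan A B where
  mid :=
    { carrier := Empty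
      action :=
        { smul := fun _ x => x.elim
          one_smul := by rintro ⟨⟩
          mul_smul := by rintro _ _ ⟨⟩ }
      isOpen_stabilizer := by rintro ⟨⟩ }
  left := fun x => x.elim
  right := fun x => x.elim
  left_equivariant := by rintro _ ⟨⟩
  right_equivariant := by rintro _ ⟨⟩

end PreSpan

/-- The relation defining the Grothendieck group (group completion) of the monoid of
equivalence classes of spans under disjoint union: a hom in the Burnside category is a
formal difference of span classes. -/
def GrothRel {G : Type} [Group G] [TopologicalSpace G] (A B : FinDiscGSet G)
    (p q : PreSpan A B × PreSpan A B) : Prop :=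
  ∃ u : PreSpan A B, PreSpan.Equiv ((p.1.add q.2).add u) ((q.1.add p.2).add u)

/-- The hom set `Span_G(A, B)` of the Burnside category: the Grothendieck group of
equivalence classes of spans from `A` to `B`, realised as a quotient of pairs of spans
(formal differences). -/
def SpanHom {G : Type} [Group G] [TopologicalSpace G] (A B : FinDiscGSet G) : Type 1 :=
  Quot (GrothRel A B)

/-- The class of a single span in the Burnside category hom set. -/
def SpanHom.ofSpan {G : Type} [Group G] [TopologicalSpace G] {A B : FinDiscGSet G}
    (s : PreSpan A B) : SpanHom A B :=
  Quot.mk _ (s, PreSpan.emptySpan A B)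

/-- A finite discrete `G`-set on which an open normal subgroup `N` acts trivially
descends to a finite discrete `G ⧸ N`-set. -/
def FinDiscGSet.descend {G : Type} [Group G] [TopologicalSpace G] [IsTopologicalGroup G]
    (N : OpenNormalSubgroup G) (X : FinDiscGSet G)
    (hX : ∀ n : G, n ∈ N → ∀ x : X.carrier, n • x = x) :
    FinDiscGSet (G ⧸ (N : Subgroup G)) where
  carrier := X.carrier
  action :=
    { smul := fun q x =>
        Quotient.liftOn' q (fun g => g • x) (by
          intro a b hab
          have hmem : a⁻¹ * b ∈ (N : Subgroup G) := QuotientGroup.leftRel_apply.mp hab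
          have h2 : (a⁻¹ * b) • x = x := hX _ hmem x
          calc a • x = a • ((a⁻¹ * b) • x) := by rw [h2]
            _ = (a * (a⁻¹ * b)) • x := (mul_smul _ _ _).symm
            _ = b • x := by rw [mul_inv_cancel_left])
      one_smul := by
        intro x
        change (1 : G) • x = x
        exact one_smul G x
      mul_smul := by
        intro q1 q2 x
        refine Quotient.inductionOn₂' q1 q2 ?_
        intro g1 g2
        change (g1 * g2) • x = g1 • (g2 • x)
        exact mul_smul g1 g2 x }
  isOpen_stabilizer := by
    intro a
    rw [← (isQuotientMap_quotient_mk').isOpen_preimage]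
    convert X.isOpen_stabilizer a using 1
    rfl

/-- Inflation of a finite discrete `G ⧸ N`-set to a finite discrete `G`-set. -/
def FinDiscGSet.inflate {G : Type} [Group G] [TopologicalSpace G] [IsTopologicalGroup G]
    (N : OpenNormalSubgroup G) (X : FinDiscGSet (G ⧸ (N : Subgroup G))) :
    FinDiscGSet G where
  carrier := X.carrier
  action := MulAction.compHom X.carrier (QuotientGroup.mk' (N : Subgroup G))
  isOpen_stabilizer := by
    intro a
    letI := MulAction.compHom X.carrier (QuotientGroup.mk' (N : Subgroup G))
    have : ((MulAction.stabilizer G a : Subgroup G) : Set G) =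
        (QuotientGroup.mk' (N : Subgroup G)) ⁻¹'
          ((MulAction.stabilizer (G ⧸ (N : Subgroup G)) a : Subgroup _) : Set _) := by
      ext g
      simp only [Set.mem_preimage, SetLike.mem_coe, MulAction.mem_stabilizer_iff]
      rfl
    rw [this]
    exact (continuous_quotient_mk').isOpen_preimage _ (X.isOpen_stabilizer a)

/-- Inflation of spans: a span of `G ⧸ N`-sets between the descents of `A` and `B`
gives a span of `G`-sets between `A` and `B`. -/
def PreSpan.inflateSpan {G : Type} [Group G] [TopologicalSpace G] [IsTopologicalGroup G]
    (N : OpenNormalSubgroup G) {A B : FinDiscGSet G}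
    (hA : ∀ n : G, n ∈ N → ∀ a : A.carrier, n • a = a)
    (hB : ∀ n : G, n ∈ N → ∀ b : B.carrier, n • b = b)
    (s : PreSpan (A.descend N hA) (B.descend N hB)) : PreSpan A B where
  mid := FinDiscGSet.inflate N s.mid
  left := s.left
  right := s.right
  left_equivariant := fun g x => s.left_equivariant (QuotientGroup.mk' (N : Subgroup G) g) x
  right_equivariant := fun g x => s.right_equivariant (QuotientGroup.mk' (N : Subgroup G) g) x


namespace SpanBounce

variable {S T U : Type}

/-- One step of the bounce construction. -/
def step (f : S ⊕ U → T ⊕ U) : T ⊕ U → T ⊕ U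
  | .inl y => .inl y
  | .inr u => f (.inr u)

theorem step_iterate_inl (f : S ⊕ U → T ⊕ U) (n : ℕ) (y : T) :
    (step f)^[n] (.inl y) = .inl y := by
  induction n with
  | zero => rfl
  | succ n ih => rw [Function.iterate_succ_apply]; exact ih

theorem iter_stable (f : S ⊕ U → T ⊕ U) {n m : ℕ} (h : n ≤ m) {z : T ⊕ U} {y : T}
    (hz : (step f)^[n] z = .inl y) : (step f)^[m] z = .inl y := by
  obtain ⟨k, rfl⟩ := Nat.exists_eq_add_of_le h
  rw [Nat.add_comm, Function.iterate_add_apply, hz, step_iterate_inl]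

theorem reach_unique (f : S ⊕ U → T ⊕ U) {z : T ⊕ U} {y y' : T}
    (h : ∃ n, (step f)^[n] z = .inl y) (h' : ∃ n, (step f)^[n] z = .inl y') : y = y' := by
  obtain ⟨n, hn⟩ := h
  obtain ⟨m, hm⟩ := h'
  rcases le_total n m with hle | hle
  · have := iter_stable f hle hn
    rw [this] at hm
    exact Sum.inl.inj hm
  · have := iter_stable f hle hm
    rw [this] at hn
    exact (Sum.inl.inj hn).symm

theorem term [Finite U] (f : S ⊕ U → T ⊕ U) (hf : Function.Injective f) (x : S) :
    ∃ n y, (step f)^[n] (f (.inl x)) = Sum.inl y := by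
  by_contra hc
  push_neg at hc
  have hr : ∀ n, ∃ u, (step f)^[n] (f (.inl x)) = .inr u := by
    intro n
    cases h : (step f)^[n] (f (.inl x)) with
    | inl y => exact absurd h (hc n y)
    | inr u => exact ⟨u, rfl⟩
  choose v hv using hr
  have key : ∀ k, ∀ d, k < d → (step f)^[k] (f (.inl x)) = (step f)^[d] (f (.inl x)) → False := by
    intro k
    induction k with
    | zero =>
      intro d hd he
      obtain ⟨d', rfl⟩ := Nat.exists_eq_succ_of_ne_zero (by omega : d ≠ 0)
      rw [Function.iterate_succ_apply', hv d'] at he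
      simp only [Function.iterate_zero_apply] at he
      exact absurd (hf (he.trans rfl)) (by simp)
    | succ k ih =>
      intro d hd he
      obtain ⟨d', rfl⟩ := Nat.exists_eq_succ_of_ne_zero (by omega : d ≠ 0)
      rw [Function.iterate_succ_apply', Function.iterate_succ_apply', hv k, hv d'] at he
      have h2 : (Sum.inr (v k) : S ⊕ U) = Sum.inr (v d') := hf he
      apply ih d' (by omega)
      rw [hv k, hv d', Sum.inr.inj h2]
  obtain ⟨n, m, hnm, hveq⟩ := Finite.exists_ne_map_eq_of_infinite v
  rcases Nat.lt_or_ge n m with hlt | hge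
  · exact key n m hlt (by rw [hv n, hv m, hveq])
  · have hlt : m < n := by omega
    exact key m n hlt (by rw [hv n, hv m, hveq])

variable [Finite U] (e : S ⊕ U ≃ T ⊕ U)

noncomputable def cancelFun (x : S) : T :=
  (term (⇑e) e.injective x).choose_spec.choose

theorem cancelFun_spec (x : S) :
    ∃ n, (step (⇑e))^[n] (e (.inl x)) = .inl (cancelFun e x) :=
  ⟨(term (⇑e) e.injective x).choose, (term (⇑e) e.injective x).choose_spec.choose_spec⟩

theorem cancelFun_eq {x : S} {y : T} (h : ∃ n, (step (⇑e))^[n] (e (.inl x)) = .inl y) :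
    cancelFun e x = y :=
  reach_unique (⇑e) (cancelFun_spec e x) h

theorem link (x : S) (y : T) (h : ∃ n, (step (⇑e))^[n] (e (.inl x)) = .inl y) :
    ∃ m, (step (⇑e.symm))^[m] (e.symm (.inl y)) = .inl x := by
  obtain ⟨n, hn⟩ := h
  have aux : ∀ n (z : T ⊕ U) (y : T), (step (⇑e))^[n] z = .inl y →
      ∀ w : S ⊕ U, e w = z → ∃ m, (step (⇑e.symm))^[m] (e.symm (.inl y)) = w := by
    intro n
    induction n with
    | zero =>
      intro z y hz w hw
      simp only [Function.iterate_zero_apply] at hz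
      subst hz
      exact ⟨0, by rw [Function.iterate_zero_apply, ← hw, Equiv.symm_apply_apply]⟩
    | succ n ih =>
      intro z y hz w hw
      cases z with
      | inl y' =>
        rw [step_iterate_inl] at hz
        cases hz
        exact ⟨0, by rw [Function.iterate_zero_apply, ← hw, Equiv.symm_apply_apply]⟩
      | inr u =>
        rw [Function.iterate_succ_apply] at hz
        obtain ⟨m, hm⟩ := ih (e (.inr u)) y hz (.inr u) rfl
        refine ⟨m + 1, ?_⟩
        rw [Function.iterate_succ_apply', hm]
        show e.symm (.inr u) = w
        rw [← hw, Equiv.symm_apply_apply]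
  exact aux n (e (.inl x)) y hn (.inl x) rfl

theorem cancel_left_inv (x : S) : cancelFun e.symm (cancelFun e x) = x :=
  cancelFun_eq e.symm (link e x (cancelFun e x) (cancelFun_spec e x))

/-- The cancellation bijection obtained from `e : S ⊕ U ≃ T ⊕ U`. -/
noncomputable def cancelEquiv : S ≃ T where
  toFun := cancelFun e
  invFun := cancelFun e.symm
  left_inv := cancel_left_inv e
  right_inv := fun y => by
    have := cancel_left_inv e.symm y
    rwa [Equiv.symm_symm] at this

theorem step_map (f : S ⊕ U → T ⊕ U) (α : S → S) (β : T → T) (υ : U → U)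
    (hcomm : ∀ z, f (Sum.map α υ z) = Sum.map β υ (f z)) (z : T ⊕ U) :
    step f (Sum.map β υ z) = Sum.map β υ (step f z) := by
  cases z with
  | inl y => rfl
  | inr u =>
    show f (.inr (υ u)) = Sum.map β υ (f (.inr u))
    exact hcomm (.inr u)

theorem iterate_map (f : S ⊕ U → T ⊕ U) (α : S → S) (β : T → T) (υ : U → U)
    (hcomm : ∀ z, f (Sum.map α υ z) = Sum.map β υ (f z)) (n : ℕ) (z : T ⊕ U) :
    (step f)^[n] (Sum.map β υ z) = Sum.map β υ ((step f)^[n] z) := by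
  induction n generalizing z with
  | zero => rfl
  | succ n ih =>
    rw [Function.iterate_succ_apply, Function.iterate_succ_apply,
      step_map f α β υ hcomm, ih]

theorem cancelFun_map (α : S → S) (β : T → T) (υ : U → U)
    (hcomm : ∀ z, e (Sum.map α υ z) = Sum.map β υ (e z)) (x : S) :
    cancelFun e (α x) = β (cancelFun e x) := by
  apply cancelFun_eq
  obtain ⟨n, hn⟩ := cancelFun_spec e x
  refine ⟨n, ?_⟩
  have h1 : e (.inl (α x)) = Sum.map β υ (e (.inl x)) := hcomm (.inl x)
  rw [h1, iterate_map (⇑e) α β υ hcomm, hn]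
  rfl

theorem iterate_elim {A : Type} (f : S ⊕ U → T ⊕ U) (q : T → A) (r : U → A)
    (hleg : ∀ u : U, Sum.elim q r (f (.inr u)) = r u) (n : ℕ) (z : T ⊕ U) :
    Sum.elim q r ((step f)^[n] z) = Sum.elim q r z := by
  induction n generalizing z with
  | zero => rfl
  | succ n ih =>
    cases z with
    | inl y => rw [step_iterate_inl]
    | inr u =>
      rw [Function.iterate_succ_apply]
      show Sum.elim q r ((step f)^[n] (f (.inr u))) = r u
      rw [ih, hleg]

theorem cancelFun_leg {A : Type} (p : S → A) (q : T → A) (r : U → A)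
    (hleg : ∀ z, Sum.elim q r (e z) = Sum.elim p r z) (x : S) :
    q (cancelFun e x) = p x := by
  obtain ⟨n, hn⟩ := cancelFun_spec e x
  have h1 : Sum.elim q r ((step (⇑e))^[n] (e (.inl x))) = Sum.elim q r (e (.inl x)) :=
    iterate_elim (⇑e) q r (fun u => (hleg (.inr u)).trans rfl) n _
  rw [hn] at h1
  have h2 : Sum.elim q r (e (.inl x)) = p x := (hleg (.inl x)).trans rfl
  exact h1.trans h2

end SpanBounce
namespace PreSpan

section EquivLemmas

variable {G : Type} [Group G] [TopologicalSpace G] {A B : FinDiscGSet G}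

theorem equiv_refl (s : PreSpan A B) : Equiv s s :=
  ⟨⟨_root_.Equiv.refl _, fun _ _ => rfl⟩, fun _ => rfl, fun _ => rfl⟩

theorem equiv_symm {s t : PreSpan A B} (h : Equiv s t) : Equiv t s := by
  obtain ⟨e, h1, h2⟩ := h
  refine ⟨⟨e.1.symm, ?_⟩, ?_, ?_⟩
  · intro g a
    apply e.1.injective
    rw [e.2, _root_.Equiv.apply_symm_apply, _root_.Equiv.apply_symm_apply]
  · intro x
    conv_rhs => rw [← e.1.apply_symm_apply x]
    rw [h1]
  · intro x
    conv_rhs => rw [← e.1.apply_symm_apply x]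
    rw [h2]

theorem equiv_trans {s t u : PreSpan A B} (h : Equiv s t) (h' : Equiv t u) : Equiv s u := by
  obtain ⟨e, h1, h2⟩ := h
  obtain ⟨f, h1', h2'⟩ := h'
  exact ⟨⟨e.1.trans f.1, fun g a => by
      simp only [_root_.Equiv.trans_apply, e.2, f.2]⟩,
    fun x => by simp only [_root_.Equiv.trans_apply, h1', h1],
    fun x => by simp only [_root_.Equiv.trans_apply, h2', h2]⟩

theorem add_congr {s s' t t' : PreSpan A B} (h : Equiv s s') (h' : Equiv t t') :
    Equiv (s.add t) (s'.add t') := by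
  obtain ⟨e, h1, h2⟩ := h
  obtain ⟨f, h1', h2'⟩ := h'
  refine ⟨⟨e.1.sumCongr f.1, ?_⟩, ?_, ?_⟩
  · rintro g (x | x)
    · exact congrArg Sum.inl (e.2 g x)
    · exact congrArg Sum.inr (f.2 g x)
  · rintro (x | x)
    · exact h1 x
    · exact h1' x
  · rintro (x | x)
    · exact h2 x
    · exact h2' x

theorem add_comm_equiv (s t : PreSpan A B) : Equiv (s.add t) (t.add s) := by
  refine ⟨⟨_root_.Equiv.sumComm _ _, ?_⟩, ?_, ?_⟩
  · rintro g (x | x) <;> rfl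
  · rintro (x | x) <;> rfl
  · rintro (x | x) <;> rfl

/-- The shuffle `(p + q) + (r + s) ≃ (p + s) + (q + r)`. -/
theorem shuffle (p q r s : PreSpan A B) :
    Equiv ((p.add q).add (r.add s)) ((p.add s).add (q.add r)) := by
  refine ⟨⟨⟨fun z => match z with
      | .inl (.inl x) => .inl (.inl x)
      | .inl (.inr x) => .inr (.inl x)
      | .inr (.inl x) => .inr (.inr x)
      | .inr (.inr x) => .inl (.inr x),
    fun z => match z with
      | .inl (.inl x) => .inl (.inl x)
      | .inr (.inl x) => .inl (.inr x)
      | .inr (.inr x) => .inr (.inl x)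
      | .inl (.inr x) => .inr (.inr x), ?_, ?_⟩, ?_⟩, ?_, ?_⟩
  · rintro ((x | x) | (x | x)) <;> rfl
  · rintro ((x | x) | (x | x)) <;> rfl
  · rintro g ((x | x) | (x | x)) <;> rfl
  · rintro ((x | x) | (x | x)) <;> rfl
  · rintro ((x | x) | (x | x)) <;> rfl

/-- Cancellation: if `s + u ≅ t + u` then `s ≅ t`. -/
theorem equiv_add_cancel {s t u : PreSpan A B} (h : Equiv (s.add u) (t.add u)) :
    Equiv s t := by
  obtain ⟨e, h1, h2⟩ := h
  have : Finite u.mid.carrier := Finite.of_fintype _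
  set f : s.mid.carrier ⊕ u.mid.carrier ≃ t.mid.carrier ⊕ u.mid.carrier := e.1 with hf
  have hcommg : ∀ g : G, ∀ z, f (Sum.map (fun a => g • a) (fun b => g • b) z) =
      Sum.map (fun a => g • a) (fun b => g • b) (f z) := by
    intro g z
    have := e.2 g z
    cases z with
    | inl x => exact this
    | inr x => exact this
  refine ⟨⟨SpanBounce.cancelEquiv f, ?_⟩, ?_, ?_⟩
  · intro g a
    exact SpanBounce.cancelFun_map f (fun a => g • a) (fun b => g • b) (fun c => g • c)
      (hcommg g) a
  · intro x
    exact SpanBounce.cancelFun_leg f s.left t.left u.left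
      (fun z => h1 z) x
  · intro x
    exact SpanBounce.cancelFun_leg f s.right t.right u.right
      (fun z => h2 z) x

theorem grothRel_iff {p q : PreSpan A B × PreSpan A B} :
    GrothRel A B p q ↔ Equiv (p.1.add q.2) (q.1.add p.2) := by
  constructor
  · rintro ⟨u, hu⟩
    exact equiv_add_cancel hu
  · intro h
    exact ⟨emptySpan A B, add_congr h (equiv_refl _)⟩

theorem grothRel_equivalence : Equivalence (GrothRel A B) := by
  constructor
  · intro p
    exact grothRel_iff.mpr (equiv_refl _)
  · intro p q h
    exact grothRel_iff.mpr (equiv_symm (grothRel_iff.mp h))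
  · rintro ⟨a1, a2⟩ ⟨b1, b2⟩ ⟨c1, c2⟩ h1 h2
    replace h1 := grothRel_iff.mp h1
    replace h2 := grothRel_iff.mp h2
    refine grothRel_iff.mpr ?_
    have big := add_congr h1 h2
    have E1 := shuffle a1 b2 b1 c2
    have E2 := equiv_trans (add_comm_equiv (b1.add a2) (c1.add b2)) (shuffle c1 b2 b1 a2)
    have := equiv_trans (equiv_trans (equiv_symm E1) big) E2
    exact equiv_add_cancel this

end EquivLemmas

end PreSpan
section Inflation

variable {G : Type} [Group G] [TopologicalSpace G] [IsTopologicalGroup G]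
  (N : OpenNormalSubgroup G) {A B : FinDiscGSet G}
  (hA : ∀ n : G, n ∈ N → ∀ a : A.carrier, n • a = a)
  (hB : ∀ n : G, n ∈ N → ∀ b : B.carrier, n • b = b)

theorem inflate_equiv {s t : PreSpan (A.descend N hA) (B.descend N hB)}
    (h : PreSpan.Equiv s t) :
    PreSpan.Equiv (s.inflateSpan N hA hB) (t.inflateSpan N hA hB) := by
  obtain ⟨e, h1, h2⟩ := h
  exact ⟨⟨e.1, fun g x => e.2 (QuotientGroup.mk' (N : Subgroup G) g) x⟩, h1, h2⟩

theorem inflate_equiv_rev {s t : PreSpan (A.descend N hA) (B.descend N hB)}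
    (h : PreSpan.Equiv (s.inflateSpan N hA hB) (t.inflateSpan N hA hB)) :
    PreSpan.Equiv s t := by
  obtain ⟨e, h1, h2⟩ := h
  refine ⟨⟨e.1, ?_⟩, h1, h2⟩
  intro q x
  refine Quotient.inductionOn' q ?_
  intro g
  exact e.2 g x

theorem inflate_add (s t : PreSpan (A.descend N hA) (B.descend N hB)) :
    PreSpan.Equiv ((s.add t).inflateSpan N hA hB)
      ((s.inflateSpan N hA hB).add (t.inflateSpan N hA hB)) := by
  refine ⟨⟨_root_.Equiv.refl _, ?_⟩, ?_, ?_⟩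
  · rintro g (x | x) <;> rfl
  · rintro (x | x) <;> rfl
  · rintro (x | x) <;> rfl

/-- The kernel of the action on a finite discrete `G`-set, as an open normal subgroup. -/
def FinDiscGSet.actKernel (X : FinDiscGSet G) : OpenNormalSubgroup G where
  toOpenSubgroup :=
    { toSubgroup := ⨅ x : X.carrier, MulAction.stabilizer G x
      isOpen' := by
        have : ((⨅ x : X.carrier, MulAction.stabilizer G x : Subgroup G) : Set G) =
            ⋂ x : X.carrier, ((MulAction.stabilizer G x : Subgroup G) : Set G) :=
          Subgroup.coe_iInf
        show IsOpen ((⨅ x : X.carrier, MulAction.stabilizer G x : Subgroup G) : Set G)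
        rw [this]
        exact isOpen_iInter_of_finite fun x => X.isOpen_stabilizer x }
  isNormal' := by
    constructor
    intro n hn g
    simp only [Subgroup.mem_iInf, MulAction.mem_stabilizer_iff] at hn ⊢
    intro x
    have := hn (g⁻¹ • x)
    calc (g * n * g⁻¹) • x = g • n • g⁻¹ • x := by rw [mul_smul, mul_smul]
      _ = g • g⁻¹ • x := by rw [this]
      _ = x := by rw [smul_inv_smul]

theorem FinDiscGSet.mem_actKernel {X : FinDiscGSet G} {n : G}
    (h : n ∈ X.actKernel) (x : X.carrier) : n • x = x := by
  have h' : n ∈ ⨅ x : X.carrier, MulAction.stabilizer G x := h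
  exact Subgroup.mem_iInf.mp h' x

/-- Descend a span along `N` contained in all the relevant kernels. -/
def PreSpan.descendSpan (s : PreSpan A B)
    (hs : ∀ n : G, n ∈ N → ∀ x : s.mid.carrier, n • x = x) :
    PreSpan (A.descend N hA) (B.descend N hB) where
  mid := s.mid.descend N hs
  left := s.left
  right := s.right
  left_equivariant := fun q x => Quotient.inductionOn' q fun g => s.left_equivariant g x
  right_equivariant := fun q x => Quotient.inductionOn' q fun g => s.right_equivariant g x

theorem inflate_descend (s : PreSpan A B)
    (hs : ∀ n : G, n ∈ N → ∀ x : s.mid.carrier, n • x = x) :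
    PreSpan.Equiv ((s.descendSpan N hA hB hs).inflateSpan N hA hB) s := by
  refine ⟨⟨_root_.Equiv.refl _, ?_⟩, fun x => rfl, fun x => rfl⟩
  intro g x
  rfl

end Inflation
/-- For a profinite group `G` and finite discrete `G`-sets `A` and `B`, the hom set
`Span_G(A,B)` in the Burnside category of `G` is isomorphic to the filtered colimit,
over the open normal subgroups `N` of `G` (acting trivially on `A` and `B`), of the hom
sets `Span_{G/N}(A,B)` in the Burnside categories of the finite quotients, with the
colimit maps induced by inflation: the inflation maps are injective and jointly
surjective. -/
theorem spanHom_isColimit_of_finite_quotients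
    (G : Type) [Group G] [TopologicalSpace G] [IsTopologicalGroup G]
    [CompactSpace G] [T2Space G] [TotallyDisconnectedSpace G]
    (A B : FinDiscGSet G) :
    ∃ ι : ∀ (N : OpenNormalSubgroup G)
        (hA : ∀ n : G, n ∈ N → ∀ a : A.carrier, n • a = a)
        (hB : ∀ n : G, n ∈ N → ∀ b : B.carrier, n • b = b),
        SpanHom (A.descend N hA) (B.descend N hB) → SpanHom A B,
      (∀ N hA hB (s t : PreSpan (A.descend N hA) (B.descend N hB)),
        ι N hA hB (Quot.mk _ (s, t)) =
          Quot.mk _ (s.inflateSpan N hA hB, t.inflateSpan N hA hB)) ∧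
      (∀ N hA hB, Function.Injective (ι N hA hB)) ∧
      (∀ h : SpanHom A B, ∃ N hA hB x, ι N hA hB x = h) := by
  classical
  refine ⟨fun N hA hB => Quot.lift
      (fun p => Quot.mk (GrothRel A B)
        (p.1.inflateSpan N hA hB, p.2.inflateSpan N hA hB))
      (fun p q hpq => Quot.sound (PreSpan.grothRel_iff.mpr
        (PreSpan.equiv_trans (PreSpan.equiv_symm (inflate_add N hA hB p.1 q.2))
          (PreSpan.equiv_trans (inflate_equiv N hA hB (PreSpan.grothRel_iff.mp hpq))
            (inflate_add N hA hB q.1 p.2))))), ?_, ?_, ?_⟩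
  · intro N hA hB s t
    rfl
  · intro N hA hB x y hxy
    induction x using Quot.ind with | _ p => ?_
    induction y using Quot.ind with | _ q => ?_
    have h := (PreSpan.grothRel_equivalence.eqvGen_iff).mp (Quot.eq.mp hxy)
    have h2 := PreSpan.grothRel_iff.mp h
    have h3 := PreSpan.equiv_trans (inflate_add N hA hB p.1 q.2)
      (PreSpan.equiv_trans h2 (PreSpan.equiv_symm (inflate_add N hA hB q.1 p.2)))
    exact Quot.sound (PreSpan.grothRel_iff.mpr (inflate_equiv_rev N hA hB h3))
  · intro h
    induction h using Quot.ind with | _ p => ?_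
    obtain ⟨s, t⟩ := p
    refine ⟨(A.actKernel ⊓ B.actKernel) ⊓ (s.mid.actKernel ⊓ t.mid.actKernel),
      fun n hn a => A.mem_actKernel hn.1.1 a, fun n hn b => B.mem_actKernel hn.1.2 b, ?_, ?_⟩
    · exact Quot.mk _
        (s.descendSpan _ _ _ (fun n hn x => s.mid.mem_actKernel hn.2.1 x),
         t.descendSpan _ _ _ (fun n hn x => t.mid.mem_actKernel hn.2.2 x))
    · exact Quot.sound (PreSpan.grothRel_iff.mpr
        (PreSpan.add_congr (inflate_descend _ _ _ s _)
          (PreSpan.equiv_symm (inflate_descend _ _ _ t _))))
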